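/- Let S be a blocking semioval with exactly 25 points in PG(2,11) having a 10-secant line ℓ, let Q and R be the two points of ℓ not in S, let S_Q (respectively S_R) be the set of points of S not on ℓ whose unique tangent line to S passes through Q (respectively R), and suppose |S_Q| = 8 and |S_R| = 7. Then the twelve lines through Q consist of ℓ, eight tangent lines to S, two 2-secants to S and one 3-secant to S; and the twelve lines through R consist of ℓ, seven tangent lines to S and four 2-secants to S. -/

import Mathlib

instance : Fact (Nat.Prime 11) := ⟨by norm_num⟩

/-- The points of `PG(2,11)`: the projectivization of `(ZMod 11)^3`. -/
abbrev PGPoint : Type := Projectivization (ZMod 11) (Fin 3 → ZMod 11)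

/-- The lines of `PG(2,11)`: the 2-dimensional subspaces of `(ZMod 11)^3`. -/
abbrev PGLine : Type :=
  {W : Submodule (ZMod 11) (Fin 3 → ZMod 11) // Module.finrank (ZMod 11) W = 2}

/-- Incidence: a point lies on a line when its representing 1-dimensional
subspace is contained in the line's 2-dimensional subspace. -/
def PGmem (P : PGPoint) (L : PGLine) : Prop := Projectivization.submodule P ≤ L.val

/-- The set of points lying on a line. -/
def linePts (L : PGLine) : Set PGPoint := {P | PGmem P L}

/-- The set of points of `S` lying on the line `L`. -/
def secantPts (S : Set PGPoint) (L : PGLine) : Set PGPoint := {P ∈ S | PGmem P L}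

/-- A line is a `k`-secant to `S` if it meets `S` in exactly `k` points. -/
def IsSecant (S : Set PGPoint) (k : ℕ) (L : PGLine) : Prop := (secantPts S L).ncard = k

/-- A tangent line to `S` is a 1-secant. -/
def IsTangent (S : Set PGPoint) (L : PGLine) : Prop := IsSecant S 1 L

/-- A blocking set: every line meets `S`, but `S` contains no line. -/
def IsBlockingSet (S : Set PGPoint) : Prop :=
  (∀ L : PGLine, (secantPts S L).Nonempty) ∧ ∀ L : PGLine, ¬ linePts L ⊆ S

/-- A semioval: every point of `S` lies on exactly one tangent line to `S`. -/
def IsSemioval (S : Set PGPoint) : Prop :=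
  ∀ P ∈ S, ∃! L : PGLine, PGmem P L ∧ IsTangent S L

/-- A blocking semioval is both a blocking set and a semioval. -/
def IsBlockingSemioval (S : Set PGPoint) : Prop := IsBlockingSet S ∧ IsSemioval S

open Module Projectivization
open scoped LinearAlgebra.Projectivization

noncomputable section Aux

abbrev KK := ZMod 11
abbrev VV := Fin 3 → ZMod 11

lemma finrank_VV : finrank KK VV = 3 := by simp

instance : Finite PGPoint := Quotient.finite _
instance : Finite (Submodule KK VV) := Finite.of_injective _ SetLike.coe_injective
instance : Finite PGLine := Subtype.finite

lemma pt_eq_of_le {P P' : PGPoint} (h : P.submodule ≤ P'.submodule) : P = P' := by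
  apply Projectivization.submodule_injective
  exact Submodule.eq_of_le_of_finrank_le h (by rw [finrank_submodule, finrank_submodule])

lemma finrank_sup_pts {P P' : PGPoint} (h : P ≠ P') :
    finrank KK ↥(P.submodule ⊔ P'.submodule) = 2 := by
  have h2 : P.submodule ⊓ P'.submodule < P.submodule := by
    rcases lt_or_eq_of_le (inf_le_left (a := P.submodule) (b := P'.submodule)) with h2 | h2
    · exact h2
    · exact absurd (pt_eq_of_le (h2 ▸ inf_le_right)) h
  have h1 := Submodule.finrank_sup_add_finrank_inf_eq P.submodule P'.submodule
  have h3 := Submodule.finrank_lt_finrank_of_lt h2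
  rw [P.finrank_submodule] at h3
  rw [P.finrank_submodule, P'.finrank_submodule, Nat.lt_one_iff.mp h3, add_zero] at h1
  exact h1

def lineThrough (P P' : PGPoint) (h : P ≠ P') : PGLine :=
  ⟨P.submodule ⊔ P'.submodule, finrank_sup_pts h⟩

lemma mem_lineThrough_left {P P' : PGPoint} (h : P ≠ P') : PGmem P (lineThrough P P' h) :=
  le_sup_left

lemma mem_lineThrough_right {P P' : PGPoint} (h : P ≠ P') : PGmem P' (lineThrough P P' h) :=
  le_sup_right

lemma line_unique {P P' : PGPoint} (h : P ≠ P') {m : PGLine}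
    (h1 : PGmem P m) (h2 : PGmem P' m) : m = lineThrough P P' h := by
  have hle : (lineThrough P P' h).val ≤ m.val := sup_le h1 h2
  exact Subtype.ext (Submodule.eq_of_le_of_finrank_le hle (by rw [m.prop, (lineThrough P P' h).prop])).symm

lemma lines_eq_of_two_pts {P P' : PGPoint} (h : P ≠ P') {m m' : PGLine}
    (h1 : PGmem P m) (h2 : PGmem P' m) (h1' : PGmem P m') (h2' : PGmem P' m') : m = m' := by
  rw [line_unique h h1 h2, line_unique h h1' h2']

lemma pt_eq_of_mem_two_lines {m m' : PGLine} (hmm : m ≠ m') {P P' : PGPoint}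
    (h1 : PGmem P m) (h1' : PGmem P m') (h2 : PGmem P' m) (h2' : PGmem P' m') : P = P' := by
  by_contra h
  exact hmm (lines_eq_of_two_pts h h1 h2 h1' h2')

end Aux

section Count

lemma card_proj_two (W : Type) [AddCommGroup W] [Module KK W] [Module.Finite KK W]
    [Fintype W] (h : finrank KK W = 2) : Nat.card (ℙ KK W) = 12 := by
  classical
  have hbij : Function.Bijective (fun x : (ℙ KK W) × KKˣ =>
      (⟨x.2.val • x.1.rep, smul_ne_zero x.2.ne_zero (rep_nonzero _)⟩ : {v : W // v ≠ 0})) := by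
    constructor
    · rintro ⟨P, c⟩ ⟨P', c'⟩ hx
      have hx' : c.val • P.rep = c'.val • P'.rep := congrArg Subtype.val hx
      have hPP : P = P' := by
        have h1 : Projectivization.mk KK (c.val • P.rep)
            (smul_ne_zero c.ne_zero (rep_nonzero _)) = P := by
          conv_rhs => rw [← P.mk_rep]
          rw [mk_eq_mk_iff]
          exact ⟨c, rfl⟩
        have h2 : Projectivization.mk KK (c'.val • P'.rep)
            (smul_ne_zero c'.ne_zero (rep_nonzero _)) = P' := by
          conv_rhs => rw [← P'.mk_rep]
          rw [mk_eq_mk_iff]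
          exact ⟨c', rfl⟩
        rw [← h1, ← h2]
        congr 1
      subst hPP
      have : c.val = c'.val := by
        have := hx'
        exact smul_left_injective KK P.rep_nonzero (by simpa using hx')
      exact Prod.ext rfl (Units.ext this)
    · rintro ⟨v, hv⟩
      have h1 : Projectivization.mk KK v hv = Projectivization.mk KK
          (Projectivization.mk KK v hv).rep (rep_nonzero _) := by rw [mk_rep]
      obtain ⟨a, ha⟩ := (mk_eq_mk_iff KK v _ hv (rep_nonzero _)).mp h1
      exact ⟨(Projectivization.mk KK v hv, a), Subtype.ext ha⟩
  have hcard := Nat.card_eq_of_bijective _ hbij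
  rw [Nat.card_prod] at hcard
  have h1 : Nat.card {v : W // v ≠ 0} = 120 := by
    rw [Nat.card_eq_fintype_card, Fintype.card_subtype_compl, Fintype.card_subtype_eq (0 : W),
      card_eq_pow_finrank (K := KK) (V := W), h, ZMod.card]
    norm_num
  have h2 : Nat.card KKˣ = 10 := by
    rw [Nat.card_eq_fintype_card, Fintype.card_units, ZMod.card]
  rw [h1, h2] at hcard
  omega

end Count

section LineCount

lemma finrank_comap_mkQ (q : Submodule KK VV) (hq : finrank KK q = 1)
    (H : Submodule KK (VV ⧸ q)) :
    finrank KK (Submodule.comap q.mkQ H) = finrank KK H + 1 := by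
  set W := Submodule.comap q.mkQ H with hW
  have hle : q ≤ W := by
    intro x hx
    simp only [hW, Submodule.mem_comap, Submodule.mkQ_apply]
    rw [(Submodule.Quotient.mk_eq_zero q).mpr hx]
    exact H.zero_mem
  have hmap : Submodule.map q.mkQ W = H :=
    Submodule.map_comap_eq_self (by rw [Submodule.range_mkQ]; exact le_top)
  have hrn := LinearMap.finrank_range_add_finrank_ker (q.mkQ.domRestrict W)
  rw [LinearMap.range_domRestrict, LinearMap.ker_domRestrict, hmap] at hrn
  have hker : q ≤ W := hle
  have e := Submodule.comapSubtypeEquivOfLe (p := LinearMap.ker q.mkQ) (q := W)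
    (by rw [Submodule.ker_mkQ]; exact hle)
  have hk : finrank KK ↥(Submodule.comap W.subtype (LinearMap.ker q.mkQ)) = 1 := by
    rw [e.finrank_eq]
    rw [show LinearMap.ker q.mkQ = q from Submodule.ker_mkQ q]
    exact hq
  rw [hk] at hrn
  exact hrn.symm

lemma card_lines_through (Q : PGPoint) : Nat.card {m : PGLine // PGmem Q m} = 12 := by
  classical
  set q := Q.submodule with hq
  have hq1 : finrank KK ↥q = 1 := Q.finrank_submodule
  have hquot : finrank KK (VV ⧸ q) = 2 := by
    have := Submodule.finrank_quotient_add_finrank q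
    rw [hq1, finrank_VV] at this
    exact Nat.succ_injective this
  have e : {H : Submodule KK (VV ⧸ q) // finrank KK H = 1} ≃ {m : PGLine // PGmem Q m} := by
    refine ⟨fun H => ⟨⟨Submodule.comap q.mkQ H.1, by rw [finrank_comap_mkQ q hq1, H.2]⟩,
        ?_⟩, fun m => ⟨Submodule.map q.mkQ m.1.1, ?_⟩, ?_, ?_⟩
    · intro x hx
      simp only [Submodule.mem_comap, Submodule.mkQ_apply]
      rw [(Submodule.Quotient.mk_eq_zero q).mpr hx]
      exact (H.1).zero_mem
    · have hle : q ≤ m.1.1 := m.2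
      have hcm : Submodule.comap q.mkQ (Submodule.map q.mkQ m.1.1) = m.1.1 := by
        rw [Submodule.comap_map_mkQ, sup_eq_right.mpr hle]
      have := finrank_comap_mkQ q hq1 (Submodule.map q.mkQ m.1.1)
      rw [hcm, m.1.2] at this
      exact Nat.succ_injective this.symm
    · intro H
      apply Subtype.ext
      exact Submodule.map_comap_eq_self (by rw [Submodule.range_mkQ]; exact le_top)
    · intro m
      apply Subtype.ext
      apply Subtype.ext
      have hle : q ≤ m.1.1 := m.2
      simp only
      rw [Submodule.comap_map_mkQ, sup_eq_right.mpr hle]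
  rw [← Nat.card_congr e, Nat.card_congr (equivSubmodule KK (VV ⧸ q)).symm]
  have : Fintype (VV ⧸ q) := Fintype.ofFinite _
  exact card_proj_two _ hquot

end LineCount

noncomputable section Core

noncomputable def tpt {S : Set PGPoint} {m : PGLine} (h : IsTangent S m) : PGPoint :=
  (Set.ncard_eq_one.mp h).choose

lemma tpt_spec {S : Set PGPoint} {m : PGLine} (h : IsTangent S m) :
    secantPts S m = {tpt h} := (Set.ncard_eq_one.mp h).choose_spec

lemma tpt_mem {S : Set PGPoint} {m : PGLine} (h : IsTangent S m) :
    tpt h ∈ S ∧ PGmem (tpt h) m := by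
  have : tpt h ∈ secantPts S m := by rw [tpt_spec h]; exact Set.mem_singleton _
  exact this

lemma tangent_ne {S : Set PGPoint} {m ℓ : PGLine} (h : IsTangent S m)
    (hℓ : IsSecant S 10 ℓ) : m ≠ ℓ := by
  intro hme
  rw [hme] at h
  rw [IsTangent, IsSecant, hℓ] at h
  exact absurd h (by norm_num)

lemma core (S : Set PGPoint) (hS : IsBlockingSemioval S) (hcard : S.ncard = 25)
    (ℓ : PGLine) (hℓ : IsSecant S 10 ℓ) (X : PGPoint)
    (hXℓ : PGmem X ℓ) (hXS : X ∉ S)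
    (SX : Set PGPoint)
    (hSX : SX = {P | P ∈ S ∧ ¬ PGmem P ℓ ∧ ∃ t : PGLine, PGmem P t ∧ IsTangent S t ∧ PGmem X t})
    (k : ℕ) (hk : SX.ncard = k) :
    ({m : PGLine | PGmem X m}).ncard = 12 ∧
    ({m : PGLine | PGmem X m ∧ IsTangent S m}).ncard = k ∧
    ∃ rest : Finset PGLine,
      (∀ m : PGLine, m ∈ rest ↔ PGmem X m ∧ m ≠ ℓ ∧ ¬ IsTangent S m) ∧
      rest.card + k = 11 ∧
      (∀ m ∈ rest, 2 ≤ (secantPts S m).ncard) ∧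
      (∑ m ∈ rest, (secantPts S m).ncard) + k = 15 := by
  classical
  haveI : Fintype PGPoint := Fintype.ofFinite _
  haveI : Fintype PGLine := Fintype.ofFinite _
  have hfinP : ∀ s : Set PGPoint, s.Finite := fun s => Set.toFinite s
  -- Part 1: 12 lines through X
  have h12 : ({m : PGLine | PGmem X m}).ncard = 12 := by
    rw [← Nat.card_coe_set_eq]
    exact card_lines_through X
  have htk : ({m : PGLine | PGmem X m ∧ IsTangent S m}).ncard = k := by
    set Tset := {m : PGLine | PGmem X m ∧ IsTangent S m} with hTset
    set g : PGLine → PGPoint := fun m => if h : IsTangent S m then tpt h else X with hg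
    have himg : g '' Tset = SX := by
      ext P
      constructor
      · rintro ⟨m, ⟨hXm, htan⟩, rfl⟩
        rw [hg]
        simp only [dif_pos htan]
        obtain ⟨hPS, hPm⟩ := tpt_mem htan
        rw [hSX]
        refine ⟨hPS, ?_, m, hPm, htan, hXm⟩
        intro hPℓ
        have hne : m ≠ ℓ := tangent_ne htan hℓ
        have hPX : tpt htan = X := pt_eq_of_mem_two_lines hne hPm hPℓ hXm hXℓ
        rw [hPX] at hPS
        exact hXS hPS
      · intro hP
        rw [hSX] at hP
        obtain ⟨hPS, hPℓ, t, hPt, htan, hXt⟩ := hP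
        refine ⟨t, ⟨hXt, htan⟩, ?_⟩
        rw [hg]
        simp only [dif_pos htan]
        have hmem : P ∈ secantPts S t := ⟨hPS, hPt⟩
        rw [tpt_spec htan] at hmem
        exact hmem.symm
    have hinj : Set.InjOn g Tset := by
      rintro m ⟨hXm, htan⟩ m' ⟨hXm', htan'⟩ hgg
      rw [hg] at hgg
      simp only [dif_pos htan, dif_pos htan'] at hgg
      obtain ⟨hPS, hPm⟩ := tpt_mem htan
      obtain ⟨hPS', hPm'⟩ := tpt_mem htan'
      obtain ⟨L, _, hLuniq⟩ := hS.2 (tpt htan) hPS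
      rw [hLuniq m ⟨hPm, htan⟩, hLuniq m' ⟨hgg ▸ hPm', htan'⟩]
    rw [← Set.ncard_image_of_injOn hinj, himg, hk]
  refine ⟨h12, htk, ?_⟩
  set n : PGLine → ℕ := fun m => (secantPts S m).ncard with hn
  set B : Finset PGLine := Finset.univ.filter (fun m => PGmem X m ∧ m ≠ ℓ) with hB
  set rest : Finset PGLine := B.filter (fun m => ¬ IsTangent S m) with hrest
  have hrest_iff : ∀ m : PGLine, m ∈ rest ↔ PGmem X m ∧ m ≠ ℓ ∧ ¬ IsTangent S m := by
    intro m
    simp only [hrest, hB, Finset.mem_filter, Finset.mem_univ, true_and]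
    tauto
  have hBcard : B.card = 11 := by
    have h1 : B = (Finset.univ.filter (fun m => PGmem X m)).erase ℓ := by
      ext m
      simp only [hB, Finset.mem_filter, Finset.mem_univ, true_and, Finset.mem_erase]
      tauto
    have h2 : (Finset.univ.filter (fun m => PGmem X m)).card = 12 := by
      rw [← h12, ← Set.toFinset_setOf, ← Set.ncard_eq_toFinset_card']
    rw [h1, Finset.card_erase_of_mem (by simp [hXℓ]), h2]
  have hBt : (B.filter (fun m => IsTangent S m)).card = k := by
    have h1 : B.filter (fun m => IsTangent S m)
        = {m : PGLine | PGmem X m ∧ IsTangent S m}.toFinset := by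
      ext m
      simp only [hB, Finset.mem_filter, Finset.mem_univ, true_and, Set.mem_toFinset,
        Set.mem_setOf_eq]
      constructor
      · rintro ⟨⟨h1, h2⟩, h3⟩; exact ⟨h1, h3⟩
      · rintro ⟨h1, h3⟩; exact ⟨⟨h1, tangent_ne h3 hℓ⟩, h3⟩
    rw [h1, ← Set.ncard_eq_toFinset_card', htk]
  have hk11 : k ≤ 11 := by
    rw [← hBt, ← hBcard]
    exact Finset.card_filter_le _ _
  have hfilter_not : rest = B \ B.filter (fun m => IsTangent S m) := by
    rw [hrest, Finset.filter_not]
  have hrestcard : rest.card + k = 11 := by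
    rw [hfilter_not, Finset.card_sdiff_of_subset (Finset.filter_subset _ _), hBt, hBcard]
    omega
  refine ⟨rest, hrest_iff, hrestcard, ?_, ?_⟩
  · intro m hm
    rw [hrest_iff] at hm
    obtain ⟨hXm, hmℓ, hnt⟩ := hm
    have h1 : (secantPts S m).Nonempty := hS.1.1 m
    have h2 : 0 < (secantPts S m).ncard := (Set.ncard_pos (hfinP _)).mpr h1
    have h3 : (secantPts S m).ncard ≠ 1 := hnt
    omega
  -- the sum
  · have hS15 : (S \ linePts ℓ).ncard = 15 := by
      have h1 : (S ∩ linePts ℓ) = secantPts S ℓ := by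
        ext P
        simp only [Set.mem_inter_iff, linePts, Set.mem_setOf_eq, secantPts]
      have h2 := Set.ncard_inter_add_ncard_diff_eq_ncard S (linePts ℓ) (hfinP S)
      rw [h1, hℓ, hcard] at h2
      omega
    set t : Finset PGPoint := (S \ linePts ℓ).toFinset with ht
    have htcard : t.card = 15 := by rw [ht, ← Set.ncard_eq_toFinset_card', hS15]
    set F : PGPoint → PGLine := fun P => if h : X ≠ P then lineThrough X P h else ℓ with hF
    have hFmem : ∀ P ∈ t, F P ∈ B := by
      intro P hP
      rw [ht, Set.mem_toFinset] at hP
      obtain ⟨hPS, hPℓ⟩ := hP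
      have hXP : X ≠ P := fun h => hXS (h ▸ hPS)
      rw [hF]
      simp only [dif_pos hXP, hB, Finset.mem_filter, Finset.mem_univ, true_and]
      refine ⟨mem_lineThrough_left hXP, ?_⟩
      intro heq
      exact hPℓ (heq ▸ mem_lineThrough_right hXP)
    have hfiber : ∀ m ∈ B, t.filter (fun P => F P = m) = (secantPts S m).toFinset := by
      intro m hm
      rw [hB] at hm
      simp only [Finset.mem_filter, Finset.mem_univ, true_and] at hm
      obtain ⟨hXm, hmℓ⟩ := hm
      ext P
      simp only [Finset.mem_filter, ht, Set.mem_toFinset]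
      simp only [Set.mem_diff, linePts, Set.mem_setOf_eq]
      constructor
      · rintro ⟨⟨hPS, hPℓ⟩, hFP⟩
        have hXP : X ≠ P := fun h => hXS (h ▸ hPS)
        rw [hF] at hFP
        simp only [dif_pos hXP] at hFP
        exact ⟨hPS, hFP ▸ mem_lineThrough_right hXP⟩
      · rintro ⟨hPS, hPm⟩
        have hXP : X ≠ P := fun h => hXS (h ▸ hPS)
        have hPℓ : ¬ PGmem P ℓ := by
          intro hPℓ
          exact hXP (pt_eq_of_mem_two_lines hmℓ hPm hPℓ hXm hXℓ).symm
        refine ⟨⟨hPS, hPℓ⟩, ?_⟩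
        rw [hF]
        simp only [dif_pos hXP]
        exact (line_unique hXP hXm hPm).symm
    have hsum := Finset.card_eq_sum_card_fiberwise hFmem
    have hsum2 : ∑ m ∈ B, (t.filter (fun P => F P = m)).card = ∑ m ∈ B, n m := by
      refine Finset.sum_congr rfl ?_
      intro m hm
      rw [hfiber m hm, hn, ← Set.ncard_eq_toFinset_card']
    have hsum3 : (∑ m ∈ B, n m) = 15 := by rw [← hsum2, ← hsum, htcard]
    have hsum5 : ∑ m ∈ B.filter (fun m => IsTangent S m), n m
        = (B.filter (fun m => IsTangent S m)).card := by
      rw [Finset.card_eq_sum_ones]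
      refine Finset.sum_congr rfl ?_
      intro m hm
      simp only [Finset.mem_filter] at hm
      exact hm.2
    have hsd := Finset.sum_sdiff (f := n) (Finset.filter_subset (fun m => IsTangent S m) B)
    rw [hsum5, hBt, hsum3] at hsd
    show (∑ m ∈ rest, n m) + k = 15
    rw [hfilter_not]
    exact hsd

end Core

lemma secant_ne_ℓ {S : Set PGPoint} {m ℓ : PGLine} {j : ℕ} (h : IsSecant S j m)
    (hℓ : IsSecant S 10 ℓ) (hj : j ≠ 10) : m ≠ ℓ := by
  intro hme
  rw [hme, IsSecant, hℓ] at h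
  exact hj h.symm

theorem line_structure_through_Q_and_R (S : Set PGPoint) (hS : IsBlockingSemioval S) (hcard : S.ncard = 25)
    (ℓ : PGLine) (hℓ : IsSecant S 10 ℓ)
    (Q R : PGPoint) (hQR : Q ≠ R)
    (hQℓ : PGmem Q ℓ) (hRℓ : PGmem R ℓ) (hQS : Q ∉ S) (hRS : R ∉ S)
    (SQ : Set PGPoint)
    (hSQ : SQ = {P | P ∈ S ∧ ¬ PGmem P ℓ ∧ ∃ t : PGLine, PGmem P t ∧ IsTangent S t ∧ PGmem Q t})
    (SR : Set PGPoint)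
    (hSR : SR = {P | P ∈ S ∧ ¬ PGmem P ℓ ∧ ∃ t : PGLine, PGmem P t ∧ IsTangent S t ∧ PGmem R t})
    (hSQ8 : SQ.ncard = 8) (hSR7 : SR.ncard = 7) :
    ({m : PGLine | PGmem Q m}).ncard = 12 ∧
      (∀ m : PGLine, PGmem Q m →
        m = ℓ ∨ IsTangent S m ∨ IsSecant S 2 m ∨ IsSecant S 3 m) ∧
      ({m : PGLine | PGmem Q m ∧ IsTangent S m}).ncard = 8 ∧
      ({m : PGLine | PGmem Q m ∧ IsSecant S 2 m}).ncard = 2 ∧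
      ({m : PGLine | PGmem Q m ∧ IsSecant S 3 m}).ncard = 1 ∧
      ({m : PGLine | PGmem R m}).ncard = 12 ∧
      (∀ m : PGLine, PGmem R m → m = ℓ ∨ IsTangent S m ∨ IsSecant S 2 m) ∧
      ({m : PGLine | PGmem R m ∧ IsTangent S m}).ncard = 7 ∧
      ({m : PGLine | PGmem R m ∧ IsSecant S 2 m}).ncard = 4 := by
  classical
  obtain ⟨h12Q, htanQ, restQ, hiffQ, hcQ, hgeQ, hsumQ⟩ :=
    core S hS hcard ℓ hℓ Q hQℓ hQS SQ hSQ 8 hSQ8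
  obtain ⟨h12R, htanR, restR, hiffR, hcR, hgeR, hsumR⟩ :=
    core S hS hcard ℓ hℓ R hRℓ hRS SR hSR 7 hSR7
  have hcQ3 : restQ.card = 3 := by omega
  have hsumQ7 : ∑ m ∈ restQ, (secantPts S m).ncard = 7 := by omega
  have hcR4 : restR.card = 4 := by omega
  have hsumR8 : ∑ m ∈ restR, (secantPts S m).ncard = 8 := by omega
  -- bounds on Q side
  have hleQ : ∀ m ∈ restQ, (secantPts S m).ncard ≤ 3 := by
    intro m hm
    have h1 := Finset.sum_erase_add restQ (fun m => (secantPts S m).ncard) hm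
    have h2 : (restQ.erase m).card • 2 ≤ ∑ x ∈ restQ.erase m, (secantPts S x).ncard :=
      Finset.card_nsmul_le_sum _ _ _ (fun x hx => hgeQ x (Finset.mem_of_mem_erase hx))
    rw [Finset.card_erase_of_mem hm, hcQ3] at h2
    simp only [smul_eq_mul] at h2
    omega
  have hQ23 : ∀ m ∈ restQ, (secantPts S m).ncard = 2 ∨ (secantPts S m).ncard = 3 := by
    intro m hm
    have := hgeQ m hm
    have := hleQ m hm
    omega
  have hfc : restQ.filter (fun m => ¬ (secantPts S m).ncard = 2)
      = restQ.filter (fun m => (secantPts S m).ncard = 3) := by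
    apply Finset.filter_congr
    intro m hm
    have := hQ23 m hm
    constructor
    · intro h; omega
    · intro h; omega
  have hab : (restQ.filter (fun m => (secantPts S m).ncard = 2)).card
      + (restQ.filter (fun m => (secantPts S m).ncard = 3)).card = 3 := by
    have h1 := Finset.card_filter_add_card_filter_not
      (s := restQ) (p := fun m => (secantPts S m).ncard = 2)
    rw [hfc] at h1
    rw [h1, hcQ3]
  have hsum23 : 2 * (restQ.filter (fun m => (secantPts S m).ncard = 2)).card
      + 3 * (restQ.filter (fun m => (secantPts S m).ncard = 3)).card = 7 := by
    have h1 := Finset.sum_filter_add_sum_filter_not restQ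
      (fun m => (secantPts S m).ncard = 2) (fun m => (secantPts S m).ncard)
    rw [hfc] at h1
    have h3 : ∑ m ∈ restQ.filter (fun m => (secantPts S m).ncard = 2),
        (secantPts S m).ncard
        = 2 * (restQ.filter (fun m => (secantPts S m).ncard = 2)).card := by
      rw [Finset.sum_congr rfl (fun m hm => (Finset.mem_filter.mp hm).2), Finset.sum_const,
        smul_eq_mul]
      ring
    have h4 : ∑ m ∈ restQ.filter (fun m => (secantPts S m).ncard = 3),
        (secantPts S m).ncard
        = 3 * (restQ.filter (fun m => (secantPts S m).ncard = 3)).card := by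
      rw [Finset.sum_congr rfl (fun m hm => (Finset.mem_filter.mp hm).2), Finset.sum_const,
        smul_eq_mul]
      ring
    rw [h3, h4, hsumQ7] at h1
    exact h1
  have ha2 : (restQ.filter (fun m => (secantPts S m).ncard = 2)).card = 2 := by omega
  have hb1 : (restQ.filter (fun m => (secantPts S m).ncard = 3)).card = 1 := by omega
  -- R side: all are 2
  have hR2 : ∀ m ∈ restR, (secantPts S m).ncard = 2 := by
    intro m hm
    have h1 := Finset.sum_erase_add restR (fun m => (secantPts S m).ncard) hm
    have h2 : (restR.erase m).card • 2 ≤ ∑ x ∈ restR.erase m, (secantPts S x).ncard :=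
      Finset.card_nsmul_le_sum _ _ _ (fun x hx => hgeR x (Finset.mem_of_mem_erase hx))
    rw [Finset.card_erase_of_mem hm, hcR4] at h2
    simp only [smul_eq_mul] at h2
    have := hgeR m hm
    omega
  refine ⟨h12Q, ?_, htanQ, ?_, ?_, h12R, ?_, htanR, ?_⟩
  · intro m hQm
    by_cases h1 : m = ℓ
    · exact Or.inl h1
    by_cases h2 : IsTangent S m
    · exact Or.inr (Or.inl h2)
    have hm : m ∈ restQ := (hiffQ m).mpr ⟨hQm, h1, h2⟩
    rcases hQ23 m hm with h | h
    · exact Or.inr (Or.inr (Or.inl h))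
    · exact Or.inr (Or.inr (Or.inr h))
  · have hset : {m : PGLine | PGmem Q m ∧ IsSecant S 2 m}
        = ↑(restQ.filter (fun m => (secantPts S m).ncard = 2)) := by
      ext m
      simp only [Set.mem_setOf_eq, Finset.coe_filter, hiffQ]
      constructor
      · rintro ⟨hQm, hs⟩
        have hne : m ≠ ℓ := secant_ne_ℓ hs hℓ (by norm_num)
        have hnt : ¬ IsTangent S m := by
          intro ht
          rw [IsTangent, IsSecant] at ht
          rw [IsSecant] at hs
          omega
        exact ⟨⟨hQm, hne, hnt⟩, hs⟩
      · rintro ⟨⟨hQm, _, _⟩, hs⟩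
        exact ⟨hQm, hs⟩
    rw [hset, Set.ncard_coe_finset, ha2]
  · have hset : {m : PGLine | PGmem Q m ∧ IsSecant S 3 m}
        = ↑(restQ.filter (fun m => (secantPts S m).ncard = 3)) := by
      ext m
      simp only [Set.mem_setOf_eq, Finset.coe_filter, hiffQ]
      constructor
      · rintro ⟨hQm, hs⟩
        have hne : m ≠ ℓ := secant_ne_ℓ hs hℓ (by norm_num)
        have hnt : ¬ IsTangent S m := by
          intro ht
          rw [IsTangent, IsSecant] at ht
          rw [IsSecant] at hs
          omega
        exact ⟨⟨hQm, hne, hnt⟩, hs⟩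
      · rintro ⟨⟨hQm, _, _⟩, hs⟩
        exact ⟨hQm, hs⟩
    rw [hset, Set.ncard_coe_finset, hb1]
  · intro m hRm
    by_cases h1 : m = ℓ
    · exact Or.inl h1
    by_cases h2 : IsTangent S m
    · exact Or.inr (Or.inl h2)
    have hm : m ∈ restR := (hiffR m).mpr ⟨hRm, h1, h2⟩
    exact Or.inr (Or.inr (hR2 m hm))
  · have hset : {m : PGLine | PGmem R m ∧ IsSecant S 2 m} = ↑restR := by
      ext m
      simp only [Set.mem_setOf_eq, Finset.mem_coe, hiffR]
      constructor
      · rintro ⟨hRm, hs⟩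
        have hne : m ≠ ℓ := secant_ne_ℓ hs hℓ (by norm_num)
        have hnt : ¬ IsTangent S m := by
          intro ht
          rw [IsTangent, IsSecant] at ht
          rw [IsSecant] at hs
          omega
        exact ⟨hRm, hne, hnt⟩
      · intro hm
        exact ⟨hm.1, hR2 m ((hiffR m).mpr hm)⟩
    rw [hset, Set.ncard_coe_finset, hcR4]
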